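/- arXiv:1011.3232 — 3 statements merged into one kernel-verified Lean document; each statement's English description precedes it below -/
import Mathlib

section
/- Let v : 2^M → ℝ be a subadditive, monotone, normalized valuation on a finite ground set M, and let c ∈ (0,1] be such that 1/c is a positive integer k. Define the c-proxy valuation v'(S) = E[v(T)] where T ⊆ S includes each element of S independently with probability c. Then for every S ⊆ M, v'(S) ≥ c·v(S). -/
open Finset

/-- The `c`-proxy valuation: `v' S = E[v T]` where `T ⊆ S` includes each
element of `S` independently with probability `c`. -/
noncomputable def proxy {α : Type*} (v : Finset α → ℝ) (c : ℝ) (S : Finset α) : ℝ :=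
  ∑ T ∈ S.powerset, c ^ T.card * (1 - c) ^ (S.card - T.card) * v T

/-- Subadditivity for finite unions. -/
lemma subadd_biUnion {α β : Type*} [DecidableEq α] (v : Finset α → ℝ)
    (hnorm : v ∅ = 0) (hsub : ∀ A B : Finset α, v (A ∪ B) ≤ v A + v B)
    (t : Finset β) (g : β → Finset α) :
    v (t.biUnion g) ≤ ∑ i ∈ t, v (g i) := by
  classical
  induction t using Finset.induction_on with
  | empty => simp [hnorm]
  | @insert a s h ih =>
    rw [Finset.biUnion_insert, Finset.sum_insert h]
    calc v (g a ∪ s.biUnion g) ≤ v (g a) + v (s.biUnion g) := hsub _ _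
      _ ≤ _ := by linarith

/-- Cardinality of the fiber of functions `f : α → Fin k` whose `i`-preimage
inside `S` is exactly `T`. -/
lemma fiber_card {α : Type*} [Fintype α] [DecidableEq α] {k : ℕ} (hk : 0 < k)
    (S T : Finset α) (hT : T ⊆ S) (i : Fin k) :
    (Finset.univ.filter (fun f : α → Fin k => S.filter (fun x => f x = i) = T)).card
      = (k - 1) ^ (S.card - T.card) * k ^ (Fintype.card α - S.card) := by
  classical
  have hset : Finset.univ.filter (fun f : α → Fin k => S.filter (fun x => f x = i) = T)
      = Fintype.piFinset (fun x => if x ∈ T then ({i} : Finset (Fin k))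
          else if x ∈ S then Finset.univ.erase i else Finset.univ) := by
    ext f
    simp only [Finset.mem_filter, Finset.mem_univ, true_and, Fintype.mem_piFinset]
    constructor
    · intro h x
      by_cases hxT : x ∈ T
      · have hx : x ∈ S.filter (fun x => f x = i) := by rw [h]; exact hxT
        simp only [Finset.mem_filter] at hx
        simp [hxT, hx.2]
      · by_cases hxS : x ∈ S
        · have hx : x ∉ S.filter (fun x => f x = i) := by rw [h]; exact hxT
          simp only [Finset.mem_filter, not_and] at hx
          simp only [hxT, if_false, hxS, if_true, Finset.mem_erase, Finset.mem_univ,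
            and_true]
          exact hx hxS
        · simp [hxT, hxS]
    · intro h
      ext x
      simp only [Finset.mem_filter]
      constructor
      · rintro ⟨hxS, hfx⟩
        by_contra hxT
        have hx := h x
        simp only [hxT, if_false, hxS, if_true, Finset.mem_erase] at hx
        exact hx.1 hfx
      · intro hxT
        have hx := h x
        simp only [hxT, if_true, Finset.mem_singleton] at hx
        exact ⟨hT hxT, hx⟩
  rw [hset, Fintype.card_piFinset]
  have hcard : ∀ x : α, ((if x ∈ T then ({i} : Finset (Fin k))
      else if x ∈ S then Finset.univ.erase i else Finset.univ).card)
      = (if x ∈ T then 1 else if x ∈ S then k - 1 else k) := by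
    intro x
    by_cases hxT : x ∈ T
    · simp [hxT]
    · by_cases hxS : x ∈ S
      · simp [hxT, hxS, Finset.card_erase_of_mem]
      · simp [hxT, hxS]
  simp only [hcard]
  rw [← Finset.prod_sdiff (Finset.subset_univ S)]
  have h1 : ∏ x ∈ Finset.univ \ S, (if x ∈ T then 1 else if x ∈ S then k - 1 else k)
      = k ^ (Fintype.card α - S.card) := by
    rw [Finset.prod_congr rfl (fun x hx => ?_), Finset.prod_const,
      Finset.card_sdiff_of_subset (Finset.subset_univ S), Finset.card_univ]
    have hxS : x ∉ S := (Finset.mem_sdiff.mp hx).2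
    have hxT : x ∉ T := fun h => hxS (hT h)
    simp [hxT, hxS]
  have h2 : ∏ x ∈ S, (if x ∈ T then 1 else if x ∈ S then k - 1 else k)
      = (k - 1) ^ (S.card - T.card) := by
    rw [← Finset.prod_sdiff hT]
    have h2a : ∏ x ∈ S \ T, (if x ∈ T then 1 else if x ∈ S then k - 1 else k)
        = (k - 1) ^ (S.card - T.card) := by
      rw [Finset.prod_congr rfl (fun x hx => ?_), Finset.prod_const,
        Finset.card_sdiff_of_subset hT]
      have := Finset.mem_sdiff.mp hx
      simp [this.1, this.2]
    have h2b : ∏ x ∈ T, (if x ∈ T then 1 else if x ∈ S then k - 1 else k) = 1 := by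
      rw [Finset.prod_congr rfl (fun x hx => ?_), Finset.prod_const, one_pow]
      simp [hx]
    rw [h2a, h2b, mul_one]
  rw [h1, h2, mul_comm]

theorem proxy_ge_scaled {α : Type*} [Fintype α] [DecidableEq α] (v : Finset α → ℝ)
    (hnorm : v ∅ = 0)
    (hmono : ∀ ⦃A B : Finset α⦄, A ⊆ B → v A ≤ v B)
    (hsub : ∀ A B : Finset α, v (A ∪ B) ≤ v A + v B)
    (c : ℝ) (hc0 : 0 < c) (hc1 : c ≤ 1)
    (k : ℕ) (hk : 0 < k) (hkc : (k : ℝ) = 1 / c) :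
    ∀ S : Finset α, c * v S ≤ proxy v c S := by
  intro S
  classical
  set n := Fintype.card α with hn
  have hkR : (0:ℝ) < (k : ℝ) := by exact_mod_cast hk
  have hkne : (k : ℝ) ≠ 0 := ne_of_gt hkR
  have hck : c * k = 1 := by
    rw [hkc]; field_simp
  have hcval : c = 1 / (k : ℝ) := by
    field_simp; linarith [hck]
  have hkm1 : ((k - 1 : ℕ) : ℝ) = (k : ℝ) - 1 := by
    have : 1 ≤ k := hk
    push_cast [Nat.cast_sub this]
    ring
  -- the key counting identity for each color i
  have key : ∀ i : Fin k,
      ∑ f : α → Fin k, v (S.filter (fun x => f x = i))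
        = ∑ T ∈ S.powerset,
            (((k - 1) ^ (S.card - T.card) * k ^ (n - S.card) : ℕ) : ℝ) * v T := by
    intro i
    rw [← Finset.sum_fiberwise_of_maps_to
      (g := fun f : α → Fin k => S.filter (fun x => f x = i))
      (t := S.powerset)
      (fun f _ => Finset.mem_powerset.mpr (Finset.filter_subset _ _))]
    refine Finset.sum_congr rfl (fun T hT => ?_)
    have hTsub : T ⊆ S := Finset.mem_powerset.mp hT
    have : ∑ f ∈ Finset.univ.filter
        (fun f : α → Fin k => S.filter (fun x => f x = i) = T),
        v (S.filter (fun x => f x = i))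
        = ∑ f ∈ Finset.univ.filter
        (fun f : α → Fin k => S.filter (fun x => f x = i) = T), v T := by
      refine Finset.sum_congr rfl (fun f hf => ?_)
      rw [(Finset.mem_filter.mp hf).2]
    rw [this, Finset.sum_const, fiber_card hk S T hTsub i, nsmul_eq_mul]
  -- subadditivity: for each f, v S ≤ sum over colors
  have hcover : ∀ f : α → Fin k,
      v S ≤ ∑ i : Fin k, v (S.filter (fun x => f x = i)) := by
    intro f
    have hU : (Finset.univ : Finset (Fin k)).biUnion
        (fun i => S.filter (fun x => f x = i)) = S := by
      ext x
      simp only [Finset.mem_biUnion, Finset.mem_univ, true_and, Finset.mem_filter]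
      constructor
      · rintro ⟨i, hx, _⟩; exact hx
      · intro hx; exact ⟨f x, hx, rfl⟩
    calc v S = v ((Finset.univ : Finset (Fin k)).biUnion
          (fun i => S.filter (fun x => f x = i))) := by rw [hU]
      _ ≤ _ := subadd_biUnion v hnorm hsub _ _
  -- sum the cover inequality over all f
  have hsumineq : ((k : ℝ) ^ n) * v S
      ≤ (k : ℝ) * ∑ T ∈ S.powerset,
          (((k - 1) ^ (S.card - T.card) * k ^ (n - S.card) : ℕ) : ℝ) * v T := by
    have h1 : ∑ f : α → Fin k, v S ≤ ∑ f : α → Fin k,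
        ∑ i : Fin k, v (S.filter (fun x => f x = i)) :=
      Finset.sum_le_sum (fun f _ => hcover f)
    have h2 : ∑ f : α → Fin k, v S = ((k : ℝ) ^ n) * v S := by
      rw [Finset.sum_const, Finset.card_univ, Fintype.card_fun, nsmul_eq_mul]
      push_cast
      rw [Fintype.card_fin]
    have h3 : ∑ f : α → Fin k, ∑ i : Fin k, v (S.filter (fun x => f x = i))
        = (k : ℝ) * ∑ T ∈ S.powerset,
            (((k - 1) ^ (S.card - T.card) * k ^ (n - S.card) : ℕ) : ℝ) * v T := by
      rw [Finset.sum_comm]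
      rw [Finset.sum_congr rfl (fun i _ => key i), Finset.sum_const,
        Finset.card_univ, Fintype.card_fin, nsmul_eq_mul]
    rw [h2] at h1
    rw [h3] at h1
    exact h1
  -- express the RHS in terms of proxy
  have hScard : S.card ≤ n := by
    rw [hn]; exact Finset.card_le_univ S
  have hproxy : ∑ T ∈ S.powerset,
      (((k - 1) ^ (S.card - T.card) * k ^ (n - S.card) : ℕ) : ℝ) * v T
      = (k : ℝ) ^ n * proxy v c S := by
    unfold proxy
    rw [Finset.mul_sum]
    refine Finset.sum_congr rfl (fun T hT => ?_)
    have hTsub : T ⊆ S := Finset.mem_powerset.mp hT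
    have hTle : T.card ≤ S.card := Finset.card_le_card hTsub
    have hTsum : T.card + (S.card - T.card) = S.card := Nat.add_sub_cancel' hTle
    have hnsum : (n - S.card) + S.card = n := Nat.sub_add_cancel hScard
    push_cast [hkm1]
    rw [← mul_assoc]
    congr 1
    have h1c : (1 : ℝ) - c = ((k : ℝ) - 1) / k := by
      rw [hcval]; field_simp
    rw [h1c, hcval, div_pow, div_pow, one_pow]
    have hkpow : (k : ℝ) ^ n = (k : ℝ) ^ (n - S.card) * ((k : ℝ) ^ T.card *
        (k : ℝ) ^ (S.card - T.card)) := by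
      rw [← pow_add, ← pow_add]
      congr 1
      omega
    rw [hkpow]
    field_simp
  rw [hproxy] at hsumineq
  -- conclude
  have hkn : (0:ℝ) < (k : ℝ) ^ n := pow_pos hkR n
  have := hsumineq
  rw [show (k : ℝ) * ((k : ℝ) ^ n * proxy v c S)
      = (k : ℝ) ^ n * ((k : ℝ) * proxy v c S) by ring] at this
  have hvk : v S ≤ (k : ℝ) * proxy v c S := le_of_mul_le_mul_left this hkn
  calc c * v S ≤ c * ((k : ℝ) * proxy v c S) := by
        apply mul_le_mul_of_nonneg_left hvk (le_of_lt hc0)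
    _ = proxy v c S := by rw [← mul_assoc, hck, one_mul]
end

section
/- Let D be a (c,p)-fractional distribution arising from a feasible LP solution x: with probability p no bidder receives anything, and with probability 1−p each bidder i receives bundle S with probability x_{i,S} and then keeps each item of S independently with probability c. If all valuations v_i are subadditive, monotone, and normalized, 1/c ∈ ℕ, and x is an optimal LP solution (so Σ_{i,S} x_{i,S} v_i(S) ≥ OPT, the optimal integral welfare), then the expected welfare of D is at least (1−p)·c·OPT. -/
open Finset

lemma v_biUnion {α β : Type*} [DecidableEq α] (v : Finset α → ℝ) (hnorm : v ∅ = 0)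
    (hsub : ∀ A B, v (A ∪ B) ≤ v A + v B) (J : Finset β) (A : β → Finset α) :
    v (J.biUnion A) ≤ ∑ j ∈ J, v (A j) := by
  classical
  induction J using Finset.induction_on with
  | empty => simp [hnorm]
  | insert _ _ h ih =>
      rw [Finset.biUnion_insert, Finset.sum_insert h]
      calc v _ ≤ v _ + v _ := hsub _ _
      _ ≤ _ := by linarith

lemma card_fiber {ι : Type*} [Fintype ι] [DecidableEq ι] (k : ℕ) (j : Fin k)
    (S T : Finset ι) (hT : T ⊆ S) :
    (Finset.univ.filter (fun f : ι → Fin k => S.filter (fun s => f s = j) = T)).card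
      = (k - 1) ^ (S.card - T.card) * k ^ (Fintype.card ι - S.card) := by
  classical
  have hEq : Finset.univ.filter (fun f : ι → Fin k => S.filter (fun s => f s = j) = T)
      = Fintype.piFinset (fun i => if i ∈ T then ({j} : Finset (Fin k))
          else if i ∈ S then {j}ᶜ else Finset.univ) := by
    ext f
    simp only [Finset.mem_filter, Finset.mem_univ, true_and, Fintype.mem_piFinset]
    constructor
    · intro h i
      by_cases hiT : i ∈ T
      · have : i ∈ S.filter (fun s => f s = j) := h ▸ hiT
        simp only [Finset.mem_filter] at this
        simp [hiT, this.2]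
      · by_cases hiS : i ∈ S
        · have : i ∉ S.filter (fun s => f s = j) := h ▸ hiT
          simp only [Finset.mem_filter, hiS, true_and] at this
          simp [hiT, hiS, this]
        · simp [hiT, hiS]
    · intro h
      ext i
      simp only [Finset.mem_filter]
      constructor
      · rintro ⟨hiS, hfi⟩
        by_contra hiT
        have := h i
        simp [hiT, hiS, hfi] at this
      · intro hiT
        have := h i
        simp only [hiT, if_pos, Finset.mem_singleton] at this
        exact ⟨hT hiT, this⟩
  rw [hEq, Fintype.card_piFinset]
  have : ∀ i : ι, (if i ∈ T then ({j} : Finset (Fin k))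
      else if i ∈ S then {j}ᶜ else Finset.univ).card
      = if i ∈ T then 1 else if i ∈ S then k - 1 else k := by
    intro i
    by_cases hiT : i ∈ T <;> by_cases hiS : i ∈ S <;>
      simp [hiT, hiS, Finset.card_compl, Fintype.card_fin]
  rw [Finset.prod_congr rfl (fun i _ => this i)]
  rw [← Finset.prod_mul_prod_compl S]
  have h1 : ∏ i ∈ S, (if i ∈ T then 1 else if i ∈ S then k - 1 else k)
      = (k - 1) ^ (S.card - T.card) := by
    rw [← Finset.prod_sdiff hT]
    have hA : ∏ i ∈ S \ T, (if i ∈ T then 1 else if i ∈ S then k - 1 else k)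
        = (k - 1) ^ (S.card - T.card) := by
      rw [Finset.prod_congr rfl (fun i hi => ?_), Finset.prod_const,
        Finset.card_sdiff_of_subset hT]
      have := Finset.mem_sdiff.mp hi
      simp [this.1, this.2]
    have hB : ∏ i ∈ T, (if i ∈ T then 1 else if i ∈ S then k - 1 else k) = 1 := by
      rw [Finset.prod_congr rfl (fun i hi => ?_), Finset.prod_const, one_pow]
      simp [hi]
    rw [hA, hB, mul_one]
    
  have h2 : ∏ i ∈ Sᶜ, (if i ∈ T then 1 else if i ∈ S then k - 1 else k)
      = k ^ (Fintype.card ι - S.card) := by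
    rw [Finset.prod_congr rfl (fun i hi => ?_), Finset.prod_const, Finset.card_compl]
    have hiS : i ∉ S := Finset.mem_compl.mp hi
    have hiT : i ∉ T := fun h => hiS (hT h)
    simp [hiS, hiT]
  rw [h1, h2]

lemma proxy_ge {ι : Type*} [Fintype ι] [DecidableEq ι] (v : Finset ι → ℝ)
    (hnorm : v ∅ = 0) (hsub : ∀ A B, v (A ∪ B) ≤ v A + v B)
    (k : ℕ) (hk : 0 < k) (S : Finset ι) :
    (1 / (k : ℝ)) * v S ≤ proxy v (1 / k) S := by
  classical
  set N := Fintype.card ι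
  set R : ℝ := ∑ T ∈ S.powerset, ((k : ℝ) - 1) ^ (S.card - T.card) * v T with hR
  -- Step 1: pointwise subadditivity bound
  have step1 : ∀ f : ι → Fin k,
      v S ≤ ∑ j : Fin k, v (S.filter (fun s => f s = j)) := by
    intro f
    have hU : S = Finset.univ.biUnion (fun j : Fin k => S.filter (fun s => f s = j)) := by
      ext s
      simp only [Finset.mem_biUnion, Finset.mem_univ, Finset.mem_filter, true_and]
      exact ⟨fun hs => ⟨f s, hs, rfl⟩, fun ⟨j, hs, _⟩ => hs⟩
    calc v S = v _ := by rw [← hU]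
    _ ≤ _ := v_biUnion v hnorm hsub _ _
  -- Step 3: fiber counting for each j
  have step3 : ∀ j : Fin k,
      ∑ f : ι → Fin k, v (S.filter (fun s => f s = j))
        = (k : ℝ) ^ (N - S.card) * R := by
    intro j
    rw [← Finset.sum_fiberwise_of_maps_to
      (g := fun f : ι → Fin k => S.filter (fun s => f s = j))
      (fun f _ => Finset.mem_powerset.mpr (Finset.filter_subset _ _))]
    rw [hR, Finset.mul_sum]
    refine Finset.sum_congr rfl (fun T hT => ?_)
    have hTS : T ⊆ S := Finset.mem_powerset.mp hT
    have : ∑ f ∈ Finset.univ.filter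
        (fun f : ι → Fin k => S.filter (fun s => f s = j) = T),
        v (S.filter (fun s => f s = j))
        = ((Finset.univ.filter
            (fun f : ι → Fin k => S.filter (fun s => f s = j) = T)).card : ℝ) * v T := by
      rw [Finset.sum_congr rfl (fun f hf => by rw [(Finset.mem_filter.mp hf).2]),
        Finset.sum_const, nsmul_eq_mul]
    rw [this, card_fiber k j S T hTS]
    push_cast [Nat.cast_sub hk]
    ring
  -- Step 2+4: sum over all f
  have hkR : (0 : ℝ) < (k : ℝ) := by exact_mod_cast hk
  have step2 : ((k : ℝ)) ^ N * v S ≤ (k : ℝ) * ((k : ℝ) ^ (N - S.card) * R) := by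
    have h := Finset.sum_le_sum (fun f (_ : f ∈ (Finset.univ : Finset (ι → Fin k))) => step1 f)
    rw [Finset.sum_const, Finset.sum_comm] at h
    simp only [step3] at h
    rw [Finset.sum_const, Finset.card_univ, Fintype.card_fun, Fintype.card_fin] at h
    simpa [nsmul_eq_mul, mul_comm, mul_assoc] using h
  -- Step 5: proxy = (1/k)^|S| * R
  have hproxy : proxy v (1 / k) S = (1 / (k : ℝ)) ^ S.card * R := by
    rw [proxy, hR, Finset.mul_sum]
    refine Finset.sum_congr rfl (fun T hT => ?_)
    have hTS : T ⊆ S := Finset.mem_powerset.mp hT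
    have hcard : T.card + (S.card - T.card) = S.card :=
      Nat.add_sub_cancel' (Finset.card_le_card hTS)
    have h1k : (1 : ℝ) - 1 / k = ((k : ℝ) - 1) / k := by field_simp
    rw [h1k, div_pow, ← hcard, pow_add, one_div, inv_pow, inv_pow]
    field_simp
    have hkpow : (k : ℝ) ^ (S.card - T.card) ≠ 0 := pow_ne_zero _ hkR.ne'
    rw [Nat.add_sub_cancel_left, one_pow, one_mul, div_pow, div_mul_eq_mul_div,
      div_mul_eq_mul_div, mul_div_assoc, div_self hkpow, mul_one, mul_comm]
  rw [hproxy]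
  -- final arithmetic
  have hSN : S.card ≤ N := Finset.card_le_univ S
  have hpow : (k : ℝ) ^ (N - S.card) * (k : ℝ) ^ S.card = (k : ℝ) ^ N := by
    rw [← pow_add, Nat.sub_add_cancel hSN]
  have ha : (0 : ℝ) < (k : ℝ) ^ S.card := pow_pos hkR _
  have hb : (0 : ℝ) < (k : ℝ) ^ (N - S.card) := pow_pos hkR _
  have key : (k : ℝ) ^ S.card * v S ≤ (k : ℝ) * R := by
    have := step2
    rw [← hpow] at this
    nlinarith
  rw [one_div, inv_pow, ← div_eq_inv_mul, ← div_eq_inv_mul,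
    div_le_div_iff₀ hkR ha]
  nlinarith

/-- The expected welfare of a `(c,p)`-fractional distribution arising from an
optimal feasible LP solution `x` is at least `(1-p)·c·OPT`.  (By linearity, the
expected welfare equals `(1-p) · Σ_i Σ_S x i S · proxy (v i) c S`.) -/
theorem cp_fractional_welfare {ι : Type*} [Fintype ι] [DecidableEq ι] (n : ℕ)
    (v : Fin n → Finset ι → ℝ)
    (hnorm : ∀ i, v i ∅ = 0)
    (hmono : ∀ i, ∀ ⦃A B : Finset ι⦄, A ⊆ B → v i A ≤ v i B)
    (hsub : ∀ i, ∀ A B : Finset ι, v i (A ∪ B) ≤ v i A + v i B)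
    (x : Fin n → Finset ι → ℝ)
    (hx0 : ∀ i S, 0 ≤ x i S)
    (hitem : ∀ j : ι,
      ∑ i, ∑ S ∈ Finset.univ.filter (fun S : Finset ι => j ∈ S), x i S ≤ 1)
    (hbidder : ∀ i, ∑ S : Finset ι, x i S ≤ 1)
    (c p : ℝ) (hc0 : 0 < c) (hc1 : c ≤ 1)
    (k : ℕ) (hk : 0 < k) (hkc : (k : ℝ) = 1 / c)
    (hp0 : 0 ≤ p) (hp1 : p ≤ 1)
    (OPT : ℝ) (hOPT : OPT ≤ ∑ i, ∑ S : Finset ι, x i S * v i S) :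
    (1 - p) * c * OPT ≤ (1 - p) * ∑ i, ∑ S : Finset ι, x i S * proxy (v i) c S := by
  have hc : c = 1 / (k : ℝ) := by
    rw [hkc]
    field_simp
  have hproxy : ∀ i (S : Finset ι), c * v i S ≤ proxy (v i) c S := by
    intro i S
    rw [hc]
    exact proxy_ge (v i) (hnorm i) (hsub i) k hk S
  have hsum : c * ∑ i, ∑ S : Finset ι, x i S * v i S
      ≤ ∑ i, ∑ S : Finset ι, x i S * proxy (v i) c S := by
    rw [Finset.mul_sum]
    refine Finset.sum_le_sum (fun i _ => ?_)
    rw [Finset.mul_sum]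
    refine Finset.sum_le_sum (fun S _ => ?_)
    calc c * (x i S * v i S) = x i S * (c * v i S) := by ring
    _ ≤ x i S * proxy (v i) c S := by
        exact mul_le_mul_of_nonneg_left (hproxy i S) (hx0 i S)
  have h1 : c * OPT ≤ ∑ i, ∑ S : Finset ι, x i S * proxy (v i) c S :=
    le_trans (mul_le_mul_of_nonneg_left hOPT (le_of_lt hc0)) hsum
  have hp : 0 ≤ 1 - p := by linarith
  calc (1 - p) * c * OPT = (1 - p) * (c * OPT) := by ring
  _ ≤ _ := mul_le_mul_of_nonneg_left h1 hp
end

section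
/- If v : Finset M → ℝ is subadditive, then for any c ∈ [0,1], the c-proxy valuation v'(S) = Σ_{T ⊆ S} c^{|T|}(1−c)^{|S|−|T|} v(T) is also subadditive on disjoint sets: for disjoint A, B ⊆ M, v'(A ∪ B) ≤ v'(A) + v'(B). -/
open Finset

lemma weight_sum {α : Type*} (c : ℝ) (S : Finset α) :
    ∑ T ∈ S.powerset, c ^ T.card * (1 - c) ^ (S.card - T.card) = 1 := by
  rw [Finset.sum_powerset_apply_card (fun m => c ^ m * (1 - c) ^ (S.card - m))]
  have h1 : (1:ℝ) = (c + (1 - c)) ^ S.card := by norm_num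
  conv_rhs => rw [h1, add_pow]
  refine Finset.sum_congr rfl fun k _ => ?_
  rw [nsmul_eq_mul]
  ring

theorem proxy_subadditive_on_disjoint {α : Type*} [DecidableEq α]
    (v : Finset α → ℝ)
    (hsub : ∀ S T : Finset α, v (S ∪ T) ≤ v S + v T)
    (c : ℝ) (hc0 : 0 ≤ c) (hc1 : c ≤ 1) :
    ∀ A B : Finset α, Disjoint A B →
      proxy v c (A ∪ B) ≤ proxy v c A + proxy v c B := by
  intro A B hAB
  have hc1' : 0 ≤ 1 - c := by linarith
  have key : ∑ p ∈ A.powerset ×ˢ B.powerset,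
        c ^ (p.1 ∪ p.2).card * (1 - c) ^ ((A ∪ B).card - (p.1 ∪ p.2).card) * v (p.1 ∪ p.2) =
      proxy v c (A ∪ B) := by
    rw [proxy]
    refine Finset.sum_nbij' (fun p => p.1 ∪ p.2) (fun T => (T ∩ A, T ∩ B)) ?_ ?_ ?_ ?_ ?_
    · intro p hp
      simp only [mem_product, mem_powerset] at hp ⊢
      exact union_subset_union hp.1 hp.2
    · intro T hT
      simp only [mem_powerset] at hT
      simp [mem_product, inter_subset_right]
    · intro p hp
      simp only [mem_product, mem_powerset] at hp
      have h1 : (p.1 ∪ p.2) ∩ A = p.1 := by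
        rw [union_inter_distrib_right, inter_eq_left.2 hp.1,
          Finset.disjoint_iff_inter_eq_empty.1 (hAB.symm.mono_left hp.2), union_empty]
      have h2 : (p.1 ∪ p.2) ∩ B = p.2 := by
        rw [union_inter_distrib_right, inter_eq_left.2 hp.2,
          Finset.disjoint_iff_inter_eq_empty.1 (hAB.mono_left hp.1), empty_union]
      simp [h1, h2]
    · intro T hT
      simp only [mem_powerset] at hT
      show T ∩ A ∪ T ∩ B = T
      rw [← inter_union_distrib_left, inter_eq_left.2 hT]
    · intro p hp; rfl
  rw [← key, Finset.sum_product]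
  have bound : ∀ TA ∈ A.powerset, ∀ TB ∈ B.powerset,
      c ^ (TA ∪ TB).card * (1 - c) ^ ((A ∪ B).card - (TA ∪ TB).card) * v (TA ∪ TB) ≤
        (c ^ TA.card * (1 - c) ^ (A.card - TA.card)) *
          (c ^ TB.card * (1 - c) ^ (B.card - TB.card)) * (v TA + v TB) := by
    intro TA hTA TB hTB
    rw [mem_powerset] at hTA hTB
    have hdisj : Disjoint TA TB := hAB.mono hTA hTB
    have hcard : (TA ∪ TB).card = TA.card + TB.card := card_union_of_disjoint hdisj
    have hcardAB : (A ∪ B).card = A.card + B.card := card_union_of_disjoint hAB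
    have hA : TA.card ≤ A.card := card_le_card hTA
    have hB : TB.card ≤ B.card := card_le_card hTB
    have hw : c ^ (TA ∪ TB).card * (1 - c) ^ ((A ∪ B).card - (TA ∪ TB).card) =
        (c ^ TA.card * (1 - c) ^ (A.card - TA.card)) *
          (c ^ TB.card * (1 - c) ^ (B.card - TB.card)) := by
      rw [hcard, hcardAB]
      have : A.card + B.card - (TA.card + TB.card) =
          (A.card - TA.card) + (B.card - TB.card) := by omega
      rw [this, pow_add, pow_add]; ring
    rw [hw]
    have hwpos : 0 ≤ (c ^ TA.card * (1 - c) ^ (A.card - TA.card)) *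
        (c ^ TB.card * (1 - c) ^ (B.card - TB.card)) := by positivity
    exact mul_le_mul_of_nonneg_left (hsub TA TB) hwpos
  calc ∑ TA ∈ A.powerset, ∑ TB ∈ B.powerset,
        c ^ (TA ∪ TB).card * (1 - c) ^ ((A ∪ B).card - (TA ∪ TB).card) * v (TA ∪ TB)
      ≤ ∑ TA ∈ A.powerset, ∑ TB ∈ B.powerset,
        (c ^ TA.card * (1 - c) ^ (A.card - TA.card)) *
          (c ^ TB.card * (1 - c) ^ (B.card - TB.card)) * (v TA + v TB) :=
        Finset.sum_le_sum fun TA hTA => Finset.sum_le_sum fun TB hTB => bound TA hTA TB hTB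
    _ = proxy v c A + proxy v c B := by
        have e1 : ∑ TA ∈ A.powerset, ∑ TB ∈ B.powerset,
            (c ^ TA.card * (1 - c) ^ (A.card - TA.card)) *
              (c ^ TB.card * (1 - c) ^ (B.card - TB.card)) * v TA = proxy v c A := by
          rw [proxy]
          refine Finset.sum_congr rfl fun TA _ => ?_
          rw [← Finset.sum_mul]
          rw [show ∑ TB ∈ B.powerset, (c ^ TA.card * (1 - c) ^ (A.card - TA.card)) *
              (c ^ TB.card * (1 - c) ^ (B.card - TB.card)) =
            (c ^ TA.card * (1 - c) ^ (A.card - TA.card)) *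
              ∑ TB ∈ B.powerset, c ^ TB.card * (1 - c) ^ (B.card - TB.card) from
            (Finset.mul_sum _ _ _).symm, weight_sum, mul_one]
        have e2 : ∑ TA ∈ A.powerset, ∑ TB ∈ B.powerset,
            (c ^ TA.card * (1 - c) ^ (A.card - TA.card)) *
              (c ^ TB.card * (1 - c) ^ (B.card - TB.card)) * v TB = proxy v c B := by
          rw [proxy, Finset.sum_comm]
          refine Finset.sum_congr rfl fun TB _ => ?_
          rw [← Finset.sum_mul,
            show ∑ TA ∈ A.powerset, (c ^ TA.card * (1 - c) ^ (A.card - TA.card)) *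
                (c ^ TB.card * (1 - c) ^ (B.card - TB.card)) =
              (∑ TA ∈ A.powerset, c ^ TA.card * (1 - c) ^ (A.card - TA.card)) *
                (c ^ TB.card * (1 - c) ^ (B.card - TB.card)) from (Finset.sum_mul _ _ _).symm,
            weight_sum, one_mul]
        calc ∑ TA ∈ A.powerset, ∑ TB ∈ B.powerset,
              (c ^ TA.card * (1 - c) ^ (A.card - TA.card)) *
                (c ^ TB.card * (1 - c) ^ (B.card - TB.card)) * (v TA + v TB)
            = (∑ TA ∈ A.powerset, ∑ TB ∈ B.powerset,
                (c ^ TA.card * (1 - c) ^ (A.card - TA.card)) *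
                  (c ^ TB.card * (1 - c) ^ (B.card - TB.card)) * v TA) +
              ∑ TA ∈ A.powerset, ∑ TB ∈ B.powerset,
                (c ^ TA.card * (1 - c) ^ (A.card - TA.card)) *
                  (c ^ TB.card * (1 - c) ^ (B.card - TB.card)) * v TB := by
              rw [← Finset.sum_add_distrib]
              refine Finset.sum_congr rfl fun TA _ => ?_
              rw [← Finset.sum_add_distrib]
              exact Finset.sum_congr rfl fun TB _ => by ring
          _ = proxy v c A + proxy v c B := by rw [e1, e2]
end
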